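/- (Denjoy–Koksma inequality) Let α be irrational with convergent denominator q_n, and let f : ℝ/ℤ → ℝ be of bounded variation. Then for every x, |(1/q_n) Σ_{j=0}^{q_n−1} f(x + jα) − ∫_0^1 f dμ| ≤ (1/q_n) Var(f). -/

import Mathlib

open MeasureTheory Set

section DKhelpers


private lemma IccIcc {f : ℝ → ℝ} {a b c : ℝ} (hab : a ≤ b) (hbc : b ≤ c) :
    eVariationOn f (Icc a b) + eVariationOn f (Icc b c) = eVariationOn f (Icc a c) := by
  have := eVariationOn.Icc_add_Icc f (s := Set.univ) hab hbc (Set.mem_univ b)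
  simpa using this

private lemma evar_comp_shift (f : ℝ → ℝ) (c a b : ℝ) :
    eVariationOn (fun s => f (c + s)) (Icc a b) = eVariationOn f (Icc (c + a) (c + b)) := by
  have h := eVariationOn.comp_eq_of_monotoneOn f (t := Icc a b) (fun s => c + s)
    (fun u _ v _ huv => by simpa using huv)
  rw [show (f ∘ fun s => c + s) = (fun s => f (c + s)) from rfl] at h
  rw [h, Set.image_const_add_Icc]

private lemma evar_shift {f : ℝ → ℝ} (hper : Function.Periodic f 1) (a : ℝ) :
    eVariationOn f (Icc a (a + 1)) = eVariationOn f (Icc 0 1) := by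
  have hint : ∀ (k : ℤ) (y : ℝ), f (y + k) = f y := by
    intro k y
    have := hper.sub_int_mul_eq (x := y + k) (n := k)
    symm; simpa using this
  set m : ℤ := ⌈a⌉ with hm
  have h1 : a ≤ (m : ℝ) := Int.le_ceil a
  have h2 : (m : ℝ) ≤ a + 1 := le_of_lt (Int.ceil_lt_add_one a)
  have e1 : eVariationOn f (Icc a (m : ℝ)) = eVariationOn f (Icc (a + 1 - m) 1) := by
    have h := evar_comp_shift f ((m : ℝ) - 1) (a + 1 - m) 1
    have hfe : (fun s => f (((m : ℝ) - 1) + s)) = f := by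
      funext s
      have : ((m : ℝ) - 1) + s = s + ((m - 1 : ℤ) : ℝ) := by push_cast; ring
      rw [this, hint]
    rw [hfe] at h
    rw [h]
    congr 1 <;> ring_nf
  have e2 : eVariationOn f (Icc (m : ℝ) (a + 1)) = eVariationOn f (Icc 0 (a + 1 - m)) := by
    have h := evar_comp_shift f (m : ℝ) 0 (a + 1 - m)
    have hfe : (fun s => f ((m : ℝ) + s)) = f := by
      funext s
      have : (m : ℝ) + s = s + (m : ℝ) := by ring
      rw [this, hint]
    rw [hfe] at h
    rw [h]
    congr 1 <;> ring_nf
  have c1 : eVariationOn f (Icc a (a + 1)) =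
      eVariationOn f (Icc a (m : ℝ)) + eVariationOn f (Icc (m : ℝ) (a + 1)) :=
    (IccIcc h1 h2).symm
  have c2 : eVariationOn f (Icc 0 1) =
      eVariationOn f (Icc 0 (a + 1 - m)) + eVariationOn f (Icc (a + 1 - m) 1) := by
    refine (IccIcc (by linarith) (by linarith)).symm
  rw [c1, c2, e1, e2, add_comm]

private lemma bv_integrableOn {g : ℝ → ℝ} (hg : BoundedVariationOn g (Icc 0 1)) :
    IntegrableOn g (Icc (0:ℝ) 1) := by
  obtain ⟨P, Q, hP, hQ, hPQ⟩ := hg.locallyBoundedVariationOn.exists_monotoneOn_sub_monotoneOn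
  rw [hPQ]
  exact (hP.integrableOn_isCompact isCompact_Icc).sub (hQ.integrableOn_isCompact isCompact_Icc)

section CF
open GenContFract

private lemma exists_int_contsAux (v : ℝ) :
    ∀ m : ℕ, ∃ pr : GenContFract.Pair ℤ,
      (GenContFract.of v).contsAux m = pr.map (fun z : ℤ => (z : ℝ)) := by
  intro m
  induction m using Nat.strong_induction_on with
  | _ m IH =>
  let g := GenContFract.of v
  rcases m with (_ | _ | m)
  · refine ⟨GenContFract.Pair.mk 1 0, ?_⟩
    simp [contsAux, GenContFract.Pair.map]
  · refine ⟨GenContFract.Pair.mk ⌊v⌋ 1, ?_⟩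
    simp [contsAux, GenContFract.Pair.map, of_h_eq_floor]
  · obtain ⟨pred_conts, pred_conts_eq⟩ := IH (m + 1) <| lt_add_one (m + 1)
    rcases s_ppred_nth_eq : g.s.get? m with gp_m | gp_m
    · refine ⟨pred_conts, ?_⟩
      have : g.contsAux (m + 2) = g.contsAux (m + 1) :=
        contsAux_stable_of_terminated (m + 1).le_succ s_ppred_nth_eq
      exact this.trans pred_conts_eq
    · obtain ⟨ppred_conts, ppred_conts_eq⟩ := IH m <| by omega
      obtain ⟨a_eq_one, z, b_eq_z⟩ : gp_m.a = 1 ∧ ∃ z : ℤ, gp_m.b = (z : ℝ) :=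
        of_partNum_eq_one_and_exists_int_partDen_eq s_ppred_nth_eq
      obtain ⟨pa, pb⟩ := pred_conts
      obtain ⟨ppa, ppb⟩ := ppred_conts
      refine ⟨GenContFract.Pair.mk (z * pa + ppa) (z * pb + ppb), ?_⟩
      show g.contsAux (m + 2) = _
      rw [contsAux_recurrence s_ppred_nth_eq ppred_conts_eq pred_conts_eq, a_eq_one, b_eq_z]
      simp [nextConts, nextNum, nextDen, GenContFract.Pair.map, ppred_conts_eq, pred_conts_eq]

private lemma exists_int_num (v : ℝ) (m : ℕ) : ∃ p : ℤ, (GenContFract.of v).nums m = (p : ℝ) := by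
  obtain ⟨pr, h⟩ := exists_int_contsAux v (m + 1)
  exact ⟨pr.a, by rw [num_eq_conts_a, nth_cont_eq_succ_nth_contAux, h]; rfl⟩

private lemma exists_int_den (v : ℝ) (m : ℕ) : ∃ p : ℤ, (GenContFract.of v).dens m = (p : ℝ) := by
  obtain ⟨pr, h⟩ := exists_int_contsAux v (m + 1)
  exact ⟨pr.b, by rw [den_eq_conts_b, nth_cont_eq_succ_nth_contAux, h]; rfl⟩

end CF

private lemma analytic (g : ℝ → ℝ) (q : ℕ) (hq1 : 1 ≤ q)
    (hBV : BoundedVariationOn g (Icc 0 1))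
    (τ : ℕ → ℕ) (t : ℕ → ℝ) (hτlt : ∀ j, j < q → τ j < q)
    (hinj : ∀ i, i < q → ∀ j, j < q → τ i = τ j → i = j)
    (hmem : ∀ j, j < q → t j ∈ Icc ((τ j : ℝ)/q) (((τ j : ℝ)+1)/q)) :
    |∑ j ∈ Finset.range q, g (t j) - q * ∫ s in (0:ℝ)..1, g s| ≤
      (eVariationOn g (Icc 0 1)).toReal := by
  have hq0 : (0:ℝ) < q := by exact_mod_cast hq1
  set c : ℕ → ℝ := fun k => k / q with hc
  have hcmono : ∀ k l : ℕ, k ≤ l → c k ≤ c l := fun k l h => by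
    simp only [hc]
    gcongr

  have hc0 : c 0 = 0 := by simp [hc]
  have hcq : c q = 1 := by simp only [hc]; exact div_self hq0.ne'
  have hsub : ∀ k, k < q → Icc (c k) (c (k+1)) ⊆ Icc (0:ℝ) 1 := by
    intro k hk
    rw [← hc0, ← hcq]
    exact Icc_subset_Icc (hcmono 0 k (Nat.zero_le k)) (hcmono (k+1) q hk)
  have hint := bv_integrableOn hBV
  have hii : ∀ k, k < q → IntervalIntegrable g volume (c k) (c (k+1)) := by
    intro k hk
    apply IntegrableOn.intervalIntegrable
    rw [Set.uIcc_of_le (hcmono k (k+1) (Nat.le_succ k))]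
    exact hint.mono_set (hsub k hk)
  -- splitting the integral
  have hsplit : ∫ s in (0:ℝ)..1, g s = ∑ k ∈ Finset.range q, ∫ s in (c k)..(c (k+1)), g s := by
    rw [intervalIntegral.sum_integral_adjacent_intervals hii, hc0, hcq]
  set A : ℕ → ℝ := fun k => ∫ s in (c k)..(c (k+1)), g s with hA
  set V : ℕ → ENNReal := fun k => eVariationOn g (Icc (c k) (c (k+1))) with hV
  have hVle : ∀ k, k < q → V k ≤ eVariationOn g (Icc 0 1) := fun k hk =>
    eVariationOn.mono g (hsub k hk)
  have hVfin : ∀ k ∈ Finset.range q, V k ≠ ⊤ := by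
    intro k hk
    exact ne_top_of_le_ne_top hBV (hVle k (Finset.mem_range.1 hk))
  -- image of τ
  have hτinj : Set.InjOn τ (Finset.range q : Finset ℕ) := by
    intro i hi j hj hij
    exact hinj i (by simpa using hi) j (by simpa using hj) hij
  have himg : Finset.image τ (Finset.range q) = Finset.range q := by
    apply Finset.eq_of_subset_of_card_le
    · intro k hk
      obtain ⟨j, hj, rfl⟩ := Finset.mem_image.1 hk
      exact Finset.mem_range.2 (hτlt j (Finset.mem_range.1 hj))
    · rw [Finset.card_image_of_injOn hτinj]
  have hreindex : ∀ F : ℕ → ℝ, ∑ k ∈ Finset.range q, F k = ∑ j ∈ Finset.range q, F (τ j) := by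
    intro F
    conv_lhs => rw [← himg]
    exact Finset.sum_image (fun i hi j hj h => hτinj hi hj h)
  -- per term bound
  have hterm : ∀ j, j < q → |g (t j) - q * A (τ j)| ≤ (V (τ j)).toReal := by
    intro j hj
    set k := τ j with hk
    have hklt : k < q := hτlt j hj
    have hba : c (k+1) - c k = 1 / q := by
      simp only [hc]
      push_cast
      field_simp
      ring
    have hcc : c (k+1) = ((k:ℝ)+1)/q := by simp [hc]
    have htj : t j ∈ Icc (c k) (c (k+1)) := by
      rw [hcc]; exact hmem j hj
    have hbd : ∀ s ∈ Set.uIoc (c k) (c (k+1)), ‖g (t j) - g s‖ ≤ (V k).toReal := by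
      intro s hs
      have hs' : s ∈ Icc (c k) (c (k+1)) := by
        rw [Set.uIoc_of_le (hcmono k (k+1) (Nat.le_succ k))] at hs
        exact Ioc_subset_Icc_self hs
      have hBVk : BoundedVariationOn g (Icc (c k) (c (k+1))) :=
        ne_top_of_le_ne_top hBV (hVle k hklt)
      have h2 := hBVk.dist_le htj hs'
      rw [Real.dist_eq] at h2
      rw [Real.norm_eq_abs]
      exact h2
    have hci : (g (t j)) * (c (k+1) - c k) - A k = ∫ s in (c k)..(c (k+1)), (g (t j) - g s) := by
      rw [intervalIntegral.integral_sub (intervalIntegrable_const) (hii k hklt),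
        intervalIntegral.integral_const]
      simp [smul_eq_mul]
      ring
    have hnorm := intervalIntegral.norm_integral_le_of_norm_le_const hbd
    rw [← hci] at hnorm
    have habs : |c (k+1) - c k| = 1/q := by rw [hba]; exact abs_of_pos (by positivity)
    rw [Real.norm_eq_abs, habs] at hnorm
    have : |g (t j) - q * A k| = q * |g (t j) * (c (k+1) - c k) - A k| := by
      rw [← abs_of_pos hq0, ← abs_mul]
      congr 1
      rw [hba]
      field_simp
      rw [abs_of_pos hq0]; ring
    rw [this]
    calc q * |g (t j) * (c (k+1) - c k) - A k| ≤ q * ((V k).toReal * (1/q)) := by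
          exact mul_le_mul_of_nonneg_left hnorm hq0.le
      _ = (V k).toReal := by field_simp
  -- telescoping variation sum
  have hVsum : ∑ k ∈ Finset.range q, V k = eVariationOn g (Icc 0 1) := by
    have key : ∀ m, m ≤ q → ∑ k ∈ Finset.range m, V k = eVariationOn g (Icc 0 (c m)) := by
      intro m hm
      induction m with
      | zero =>
        simp [hc0, eVariationOn.subsingleton g (by simp [Set.Icc_self] : (Icc (0:ℝ) 0).Subsingleton)]
      | succ m ih =>
        rw [Finset.sum_range_succ, ih (Nat.le_of_succ_le hm),
          IccIcc (by rw [← hc0]; exact hcmono 0 m (Nat.zero_le m)) (hcmono m (m+1) (Nat.le_succ m))]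
    have := key q le_rfl
    rw [hcq] at this
    exact this
  -- assemble
  have hsum2 : (q:ℝ) * ∫ s in (0:ℝ)..1, g s = ∑ j ∈ Finset.range q, q * A (τ j) := by
    rw [hsplit, hreindex (fun k => A k), Finset.mul_sum]
  rw [hsum2, ← Finset.sum_sub_distrib]
  calc |∑ j ∈ Finset.range q, (g (t j) - q * A (τ j))|
      ≤ ∑ j ∈ Finset.range q, |g (t j) - q * A (τ j)| := Finset.abs_sum_le_sum_abs _ _
    _ ≤ ∑ j ∈ Finset.range q, (V (τ j)).toReal := by
        apply Finset.sum_le_sum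
        intro j hj
        exact hterm j (Finset.mem_range.1 hj)
    _ = ∑ k ∈ Finset.range q, (V k).toReal := (hreindex (fun k => (V k).toReal)).symm
    _ = (∑ k ∈ Finset.range q, V k).toReal := (ENNReal.toReal_sum hVfin).symm
    _ = (eVariationOn g (Icc 0 1)).toReal := by rw [hVsum]

end DKhelpers

theorem stmt2 (α : ℝ) (hirr : Irrational α) (n : ℕ) (q : ℕ)
    (hq : (q : ℝ) = (GenContFract.of α).dens n)
    (f : ℝ → ℝ) (hper : Function.Periodic f 1)
    (hBV : BoundedVariationOn f (Set.Icc 0 1)) (x : ℝ) :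
    |(1 / q : ℝ) * ∑ j ∈ Finset.range q, f (x + j * α) - ∫ t in (0 : ℝ)..1, f t| ≤
      (1 / q : ℝ) * (eVariationOn f (Set.Icc 0 1)).toReal := by
  -- basic facts about the continued fraction
  have hnt : ∀ m, ¬(GenContFract.of α).TerminatedAt m := by
    intro m hm
    obtain ⟨r, hr⟩ := (GenContFract.terminates_iff_rat α).1 ⟨m, hm⟩
    exact hirr ⟨r, hr.symm⟩
  have hq1 : 1 ≤ q := by
    have hd := GenContFract.succ_nth_fib_le_of_nth_den (K := ℝ) (v := α) (n := n)
      (Or.inr (hnt _))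
    have hfib : 1 ≤ Nat.fib (n + 1) := Nat.fib_pos.2 n.succ_pos
    have : (1 : ℝ) ≤ (q : ℝ) := by
      rw [hq]
      calc (1:ℝ) ≤ (Nat.fib (n+1) : ℝ) := by exact_mod_cast hfib
        _ ≤ _ := hd
    exact_mod_cast this
  have hq0R : (0:ℝ) < q := by exact_mod_cast hq1
  have hqRne : (q:ℝ) ≠ 0 := ne_of_gt hq0R
  have hq0Z : (0:ℤ) < (q:ℤ) := by exact_mod_cast hq1
  obtain ⟨p, hp⟩ := exists_int_num α n
  obtain ⟨p1, hp1⟩ := exists_int_num α (n + 1)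
  obtain ⟨d1, hd1⟩ := exists_int_den α (n + 1)
  -- determinant and coprimality
  have hdet : (p * d1 - (q:ℤ) * p1 : ℤ) = (-1)^(n+1) := by
    have h := SimpContFract.determinant (s := SimpContFract.of α) (n := n) (hnt n)
    have h' : (GenContFract.of α).nums n * (GenContFract.of α).dens (n+1) -
        (GenContFract.of α).dens n * (GenContFract.of α).nums (n+1) = (-1:ℝ)^(n+1) := h
    rw [hp, hp1, hd1, ← hq] at h'
    exact_mod_cast h'
  have hcop : IsCoprime p (q:ℤ) := by
    refine ⟨(-1)^(n+1) * d1, -((-1)^(n+1) * p1), ?_⟩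
    have hsq : ((-1:ℤ))^(n+1) * ((-1:ℤ))^(n+1) = 1 := by
      rw [← pow_add]
      exact Even.neg_one_pow ⟨n+1, by ring⟩
    linear_combination ((-1:ℤ)^(n+1)) * hdet + hsq
  -- approximation
  set D := (GenContFract.of α).dens (n+1) with hD
  have hDq : (q:ℝ) ≤ D := hq ▸ GenContFract.of_den_mono
  have hD0 : (0:ℝ) < D := lt_of_lt_of_le hq0R hDq
  have happ : |α - (p:ℝ)/q| ≤ 1/((q:ℝ)*D) := by
    have h := GenContFract.abs_sub_convs_le (v := α) (n := n) (hnt n)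
    rwa [GenContFract.conv_eq_num_div_den, hp, ← hq, ← hD] at h
  set δ : ℝ := α - (p:ℝ)/q with hδdef
  have hjδ : ∀ j : ℕ, j < q → (j:ℝ) * |δ| ≤ 1/q := by
    intro j hj
    have hj' : (j:ℝ) ≤ (q:ℝ) := by exact_mod_cast hj.le
    calc (j:ℝ) * |δ| ≤ (q:ℝ) * (1/((q:ℝ)*D)) := by
          apply mul_le_mul hj' happ (abs_nonneg _) hq0R.le
      _ ≤ (q:ℝ) * (1/((q:ℝ)*(q:ℝ))) := by gcongr
      _ = 1/q := by field_simp
  -- residues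
  set r : ℕ → ℤ := fun j => ((j:ℤ) * p) % q with hrdef
  have hr0 : ∀ j, 0 ≤ r j := fun j => Int.emod_nonneg _ (ne_of_gt hq0Z)
  have hrq : ∀ j, r j < q := fun j => Int.emod_lt_of_pos _ hq0Z
  have hfrac : ∀ j : ℕ, ∃ m : ℤ, x + ((r j : ℝ)/q + (j:ℝ)*δ) = (x + (j:ℝ) * α) + (m : ℝ) := by
    intro j
    refine ⟨-(((j:ℤ)*p)/q), ?_⟩
    have hid : (q:ℤ) * (((j:ℤ)*p)/q) + ((j:ℤ)*p) % q = (j:ℤ)*p := Int.mul_ediv_add_emod _ _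
    have hcast : (q:ℝ) * ((((j:ℤ)*p)/q : ℤ) : ℝ) + ((r j : ℤ) : ℝ) = (j:ℝ)*(p:ℝ) := by
      exact_mod_cast hid
    have hδ' : (j:ℝ) * δ = (j:ℝ)*α - (j:ℝ)*(p:ℝ)/q := by rw [hδdef]; ring
    push_cast
    rw [hδ']
    field_simp
    linarith [hcast]
  -- injectivity of residues
  have hrinj : ∀ i j : ℕ, i < q → j < q → r i = r j → i = j := by
    intro i j hi hj hrij
    have h1 : ((i:ℤ)*p) % q = ((j:ℤ)*p) % q := hrij
    have h2 : (q:ℤ) ∣ ((j:ℤ)*p - (i:ℤ)*p) := Int.ModEq.dvd h1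
    have h3 : (q:ℤ) ∣ ((j:ℤ) - i) := by
      have : ((j:ℤ)*p - (i:ℤ)*p) = ((j:ℤ) - i) * p := by ring
      rw [this] at h2
      exact (hcop.symm).dvd_of_dvd_mul_right h2
    obtain ⟨c, hc⟩ := h3
    have hb1 : -(q:ℤ) < (j:ℤ) - i := by omega
    have hb2 : (j:ℤ) - i < q := by omega
    rw [hc] at hb1 hb2
    have hc1 : c < 1 := by nlinarith
    have hc2 : -1 < c := by nlinarith
    have : c = 0 := by omega
    rw [this, mul_zero] at hc
    omega
  have hrpos : ∀ j : ℕ, 1 ≤ j → j < q → 1 ≤ r j := by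
    intro j h1 h2
    by_contra h
    have hr00 : r j = 0 := by have := hr0 j; omega
    have hdvd : (q:ℤ) ∣ (j:ℤ)*p := Int.dvd_of_emod_eq_zero hr00
    have hdj : (q:ℤ) ∣ (j:ℤ) := (hcop.symm).dvd_of_dvd_mul_right hdvd
    have := Int.le_of_dvd (by exact_mod_cast h1) hdj
    omega
  -- g and its variation
  set g : ℝ → ℝ := fun s => f (x + s) with hgdef
  have hper_int : ∀ (y : ℝ) (k : ℤ), f (y + k) = f y := by
    intro y k
    symm
    simpa using hper.sub_int_mul_eq (x := y + k) (n := k)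
  have hgval : ∀ j : ℕ, g ((r j : ℝ)/q + (j:ℝ)*δ) = f (x + (j:ℝ)*α) := by
    intro j
    obtain ⟨m, hm⟩ := hfrac j
    show f (x + ((r j : ℝ)/q + (j:ℝ)*δ)) = f (x + (j:ℝ)*α)
    rw [hm, hper_int]
  have hgvar : eVariationOn g (Icc 0 1) = eVariationOn f (Icc 0 1) := by
    have h := evar_comp_shift f x 0 1
    rw [add_zero] at h
    rw [hgdef, h, evar_shift hper x]
  have hgBV : BoundedVariationOn g (Icc 0 1) := by
    show eVariationOn g (Icc 0 1) ≠ ⊤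
    rw [hgvar]
    exact hBV
  -- construct the combinatorial data
  obtain ⟨τ, t, hτlt, hinj, hmem, hteq⟩ :
      ∃ (τ : ℕ → ℕ) (t : ℕ → ℝ), (∀ j, j < q → τ j < q) ∧
        (∀ i, i < q → ∀ j, j < q → τ i = τ j → i = j) ∧
        (∀ j, j < q → t j ∈ Icc ((τ j : ℝ)/q) (((τ j : ℝ)+1)/q)) ∧
        (∀ j, j < q → g (t j) = f (x + (j:ℝ)*α)) := by
    have htoNat : ∀ j : ℕ, (((r j).toNat : ℕ) : ℝ) = ((r j : ℤ) : ℝ) := by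
      intro j
      have h := Int.toNat_of_nonneg (hr0 j)
      exact_mod_cast congrArg (fun z : ℤ => (z : ℝ)) h
    rcases le_or_gt 0 δ with hδpos | hδneg
    · refine ⟨fun j => (r j).toNat, fun j => (r j : ℝ)/q + (j:ℝ)*δ, ?_, ?_, ?_, ?_⟩
      · intro j hj
        show (r j).toNat < q
        have := hrq j
        omega
      · intro i hi j hj hij
        have hij' : (r i).toNat = (r j).toNat := hij
        apply hrinj i j hi hj
        have h0i := hr0 i
        have h0j := hr0 j
        omega
      · intro j hj
        show ((r j : ℤ) : ℝ)/q + (j:ℝ)*δ ∈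
          Icc ((((r j).toNat : ℕ) : ℝ)/q) (((((r j).toNat : ℕ) : ℝ)+1)/q)
        rw [htoNat j, Set.mem_Icc]
        have hj0 : 0 ≤ (j:ℝ)*δ := mul_nonneg (Nat.cast_nonneg j) hδpos
        have hj1 : (j:ℝ)*δ ≤ 1/q := by
          have := hjδ j hj
          rwa [abs_of_nonneg hδpos] at this
        constructor
        · exact le_add_of_nonneg_right hj0
        · have he : (((r j : ℤ):ℝ) + 1)/q = ((r j : ℤ):ℝ)/q + 1/q := by ring
          rw [he]
          exact add_le_add_right hj1 _
      · intro j hj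
        exact hgval j
    · refine ⟨fun j => if j = 0 then q - 1 else (r j).toNat - 1,
        fun j => if j = 0 then 1 else (r j : ℝ)/q + (j:ℝ)*δ, ?_, ?_, ?_, ?_⟩
      · intro j hj
        dsimp only
        by_cases h : j = 0
        · rw [if_pos h]; omega
        · rw [if_neg h]
          have := hrq j
          omega
      · intro i hi j hj hij
        dsimp only at hij
        by_cases h1 : i = 0 <;> by_cases h2 : j = 0
        · rw [h1, h2]
        · exfalso
          rw [if_pos h1, if_neg h2] at hij
          have hj1 : 1 ≤ r j := hrpos j (by omega) hj
          have hj2 := hrq j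
          omega
        · exfalso
          rw [if_neg h1, if_pos h2] at hij
          have hi1 : 1 ≤ r i := hrpos i (by omega) hi
          have hi2 := hrq i
          omega
        · rw [if_neg h1, if_neg h2] at hij
          have hi1 : 1 ≤ r i := hrpos i (by omega) hi
          have hj1 : 1 ≤ r j := hrpos j (by omega) hj
          apply hrinj i j hi hj
          omega
      · intro j hj
        dsimp only
        by_cases h : j = 0
        · rw [if_pos h, if_pos h, Set.mem_Icc]
          have hcast : (((q - 1 : ℕ) : ℕ) : ℝ) = (q:ℝ) - 1 := by
            have h1 : ((q - 1 : ℕ) : ℤ) = (q : ℤ) - 1 := by omega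
            exact_mod_cast congrArg (fun z : ℤ => (z : ℝ)) h1
          rw [hcast]
          constructor
          · rw [div_le_one hq0R]; linarith
          · have he : ((q:ℝ) - 1 + 1)/q = 1 := by field_simp; ring
            rw [he]
        · rw [if_neg h, if_neg h, Set.mem_Icc]
          have hj1 : 1 ≤ r j := hrpos j (by omega) hj
          have hcast : ((((r j).toNat - 1 : ℕ)) : ℝ) = ((r j : ℤ) : ℝ) - 1 := by
            have h1 : (((r j).toNat - 1 : ℕ) : ℤ) = r j - 1 := by omega
            exact_mod_cast congrArg (fun z : ℤ => (z : ℝ)) h1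
          rw [hcast]
          have hjd : (j:ℝ)*|δ| ≤ 1/q := hjδ j hj
          rw [abs_of_neg hδneg] at hjd
          have hjd1 : -(1/(q:ℝ)) ≤ (j:ℝ)*δ := by nlinarith
          have hjd2 : (j:ℝ)*δ ≤ 0 :=
            mul_nonpos_of_nonneg_of_nonpos (Nat.cast_nonneg j) hδneg.le
          have e1 : (((r j : ℤ):ℝ) - 1)/q = ((r j : ℤ):ℝ)/q - 1/q := by ring
          have e2 : ((((r j : ℤ):ℝ) - 1) + 1)/q = ((r j : ℤ):ℝ)/q := by ring
          rw [e1, e2]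
          constructor
          · have := add_le_add_right hjd1 (((r j : ℤ):ℝ)/q)
            calc ((r j : ℤ):ℝ)/q - 1/q = ((r j : ℤ):ℝ)/q + -(1/(q:ℝ)) := by ring
              _ ≤ ((r j : ℤ):ℝ)/q + (j:ℝ)*δ := this
          · simpa using add_le_add_left hjd2 (((r j : ℤ):ℝ)/q)
      · intro j hj
        dsimp only
        by_cases h : j = 0
        · rw [if_pos h, h]
          show f (x + 1) = f (x + ((0:ℕ):ℝ)*α)
          have e1 : x + ((0:ℕ):ℝ)*α = x := by push_cast; ring
          have e2 : x + 1 = x + ((1:ℤ):ℝ) := by push_cast; ring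
          rw [e1, e2, hper_int]
        · rw [if_neg h]
          exact hgval j
  -- apply the analytic lemma
  have hmain := analytic g q hq1 hgBV τ t hτlt hinj hmem
  -- rewrite the sum
  have hS : ∑ j ∈ Finset.range q, f (x + (j:ℝ) * α) = ∑ j ∈ Finset.range q, g (t j) := by
    apply Finset.sum_congr rfl
    intro j hj
    exact (hteq j (Finset.mem_range.1 hj)).symm
  -- rewrite the integral
  have hIg : ∫ s in (0:ℝ)..1, g s = ∫ s in (0:ℝ)..1, f s := by
    have h1 : ∫ s in (0:ℝ)..1, f (x + s) = ∫ s in x..(x+1), f s := by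
      simpa using intervalIntegral.integral_comp_add_left f x
    have h2 : ∫ s in x..(x+1), f s = ∫ s in (0:ℝ)..(0+1), f s :=
      hper.intervalIntegral_add_eq x 0
    rw [hgdef]
    rw [h1, h2]
    norm_num
  rw [hS, ← hIg, ← hgvar]
  have heq : (1/(q:ℝ)) * ∑ j ∈ Finset.range q, g (t j) - ∫ s in (0:ℝ)..1, g s =
      (1/(q:ℝ)) * (∑ j ∈ Finset.range q, g (t j) - (q:ℝ) * ∫ s in (0:ℝ)..1, g s) := by
    field_simp
  rw [heq, abs_mul, abs_of_pos (by positivity : (0:ℝ) < 1/(q:ℝ))]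
  exact mul_le_mul_of_nonneg_left hmain (by positivity)
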